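/- Let t > 0 with t ≤ 1. For odd n ≥ 3, every graph of the form H + K̄_{(n+1)/2}, where H is an arbitrary graph on (n−1)/2 vertices and + denotes the join, is not Hamiltonian and satisfies σ₂ ≤ 2n/(t'+1) − 2 where t' = (n−1)/(n+1) is an upper bound on its toughness. -/

import Mathlib

set_option maxRecDepth 8000


open SimpleGraph

/-- The number of components of `G − S`. -/
noncomputable def numComp {V : Type*} (G : SimpleGraph V) (S : Set V) : ℕ :=
  Nat.card ((G.induce Sᶜ).ConnectedComponent)

/-- `G` is `t`-tough: `|S| ≥ t · c(G − S)` for every `S` with `c(G − S) ≥ 2`. -/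
def Tough {V : Type*} [Fintype V] (t : ℝ) (G : SimpleGraph V) : Prop :=
  ∀ S : Finset V, 2 ≤ numComp G ↑S → t * (numComp G ↑S : ℝ) ≤ (S.card : ℝ)

/-- The degree of a vertex. -/
noncomputable def deg {V : Type*} [Fintype V] (G : SimpleGraph V) (v : V) : ℕ :=
  Nat.card (G.neighborSet v)

/-- The join of two graphs: all edges added between the two vertex sets. -/
def graphJoin {α β : Type*} (G : SimpleGraph α) (H : SimpleGraph β) :
    SimpleGraph (α ⊕ β) where
  Adj x y :=
    match x, y with
    | Sum.inl a, Sum.inl b => G.Adj a b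
    | Sum.inr a, Sum.inr b => H.Adj a b
    | _, _ => True
  symm := ⟨by rintro (a | a) (b | b) h <;> simp_all <;> exact h.symm⟩
  loopless := ⟨by rintro (a | a) h <;> simp_all⟩

lemma exists_edge_of_mem_support' {V : Type*} {G : SimpleGraph V} :
    ∀ {u v : V} (p : G.Walk u v), ¬ p.Nil → ∀ x ∈ p.support, ∃ e ∈ p.edges, x ∈ e := by
  intro u v p
  induction p with
  | nil => intro h; exact absurd SimpleGraph.Walk.nil_nil h
  | @cons u w v h q ih =>
    intro _ x hx
    rw [SimpleGraph.Walk.support_cons, List.mem_cons] at hx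
    rcases hx with rfl | hx
    · exact ⟨s(x, w), by simp, by simp⟩
    · by_cases hq : q.Nil
      · have : x = w := by
          rcases q with _ | _
          · simpa using hx
          · exact absurd hq SimpleGraph.Walk.not_nil_cons
        exact ⟨s(u, w), by simp, by simp [this]⟩
      · obtain ⟨e, he, hxe⟩ := ih hq x hx
        exact ⟨e, by simp [he], hxe⟩

lemma numComp_bot {W : Type*} :
    Nat.card (SimpleGraph.ConnectedComponent (⊥ : SimpleGraph W)) = Nat.card W := by
  refine (Nat.card_eq_of_bijective (SimpleGraph.connectedComponentMk (⊥ : SimpleGraph W))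
    ⟨fun a b h => ?_, ?_⟩).symm
  · exact SimpleGraph.reachable_bot.mp (SimpleGraph.ConnectedComponent.exact h)
  · exact SimpleGraph.ConnectedComponent.ind (fun w => ⟨w, rfl⟩)

/-- Members of the extremal family H_{(n−1)/2} + K̄_{(n+1)/2} are
non-hamiltonian and have σ₂ ≤ 2n/(t'+1) − 2 where t' = (n−1)/(n+1) bounds
their toughness from above. -/
theorem extremal_family (t : ℝ) (ht0 : 0 < t) (ht1 : t ≤ 1)
    (n : ℕ) (hodd : Odd n) (hn : 3 ≤ n)
    (H : SimpleGraph (Fin ((n - 1) / 2))) :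
    ∀ G : SimpleGraph (Fin ((n - 1) / 2) ⊕ Fin ((n + 1) / 2)),
    G = graphJoin H (⊥ : SimpleGraph (Fin ((n + 1) / 2))) →
      ¬ G.IsHamiltonian ∧
      (∃ u v, u ≠ v ∧ ¬ G.Adj u v ∧
        (deg G u : ℝ) + (deg G v : ℝ) ≤
          2 * (n : ℝ) / (((n : ℝ) - 1) / ((n : ℝ) + 1) + 1) - 2) ∧
      (∀ s : ℝ, Tough s G → s ≤ ((n : ℝ) - 1) / ((n : ℝ) + 1)) := by
  obtain ⟨j, hj⟩ := hodd
  intro G hG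
  subst hG
  set J := graphJoin H (⊥ : SimpleGraph (Fin ((n + 1) / 2))) with hJ
  have hm : (n - 1) / 2 = j := by omega
  have hk : (n + 1) / 2 = j + 1 := by omega
  have hj1 : 1 ≤ j := by omega
  have card_eq : Fintype.card (Fin ((n - 1) / 2) ⊕ Fin ((n + 1) / 2)) = n := by
    simp [Fintype.card_sum]; omega
  have hadj_rr : ∀ a b : Fin ((n + 1) / 2), ¬ J.Adj (Sum.inr a) (Sum.inr b) := by
    intro a b h
    simp only [hJ, graphJoin] at h
    exact h
  refine ⟨?_, ?_, ?_⟩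
  · -- not Hamiltonian
    intro hHam
    obtain ⟨a, p, hp⟩ := hHam (by omega)
    have htrail : p.IsTrail := hp.isCycle.isTrail
    have hlen : p.edges.length = n := by
      rw [SimpleGraph.Walk.length_edges, hp.length_eq, card_eq]
    classical
    set s : Finset (Sym2 _) := p.edges.toFinset with hs
    have hscard : s.card = n := by
      rw [hs, List.toFinset_card_of_nodup htrail.edges_nodup, hlen]
    have claimA : ∀ u : Fin ((n + 1) / 2),
        2 ≤ (s.filter (fun e => Sum.inr u ∈ e)).card := by
      intro u
      have hcnt : (s.filter (fun e => Sum.inr u ∈ e)).card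
          = p.edges.countP (fun e => Sum.inr u ∈ e) := by
        rw [hs, List.countP_eq_length_filter,
          ← List.toFinset_card_of_nodup (htrail.edges_nodup.filter _),
          List.toFinset_filter]
        simp
      have heven : Even (p.edges.countP (fun e => Sum.inr u ∈ e)) := by
        rw [htrail.even_countP_edges_iff]
        intro h; exact absurd rfl h
      have hpos : 0 < p.edges.countP (fun e => Sum.inr u ∈ e) := by
        obtain ⟨e, he, hue⟩ := exists_edge_of_mem_support' p
          (SimpleGraph.Walk.IsCycle.not_nil hp.isCycle) (Sum.inr u) (hp.mem_support _)
        rw [List.countP_eq_length_filter]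
        have : e ∈ p.edges.filter (fun e => Sum.inr u ∈ e) := by
          rw [List.mem_filter]; exact ⟨he, by simpa using hue⟩
        exact List.length_pos_iff.mpr (List.ne_nil_of_mem this)
      obtain ⟨r, hr⟩ := heven
      omega
    have claimB : ∀ e ∈ s,
        (Finset.univ.filter (fun u : Fin ((n + 1) / 2) => Sum.inr u ∈ e)).card ≤ 1 := by
      intro e he
      have heE : e ∈ J.edgeSet :=
        SimpleGraph.Walk.edges_subset_edgeSet p (by rwa [hs, List.mem_toFinset] at he)
      refine Finset.card_le_one.mpr ?_
      intro u hu u' hu'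
      rw [Finset.mem_filter] at hu hu'
      induction e with
      | h x y =>
        have hadj : J.Adj x y := heE
        have h1 : Sum.inr u = x ∨ Sum.inr u = y := Sym2.mem_iff.mp hu.2
        have h2 : Sum.inr u' = x ∨ Sum.inr u' = y := Sym2.mem_iff.mp hu'.2
        rcases h1 with h1 | h1 <;> rcases h2 with h2 | h2
        · rw [← h1] at h2; exact Sum.inr_injective h2.symm
        · exfalso; rw [← h1, ← h2] at hadj; exact hadj_rr _ _ hadj
        · exfalso; rw [← h1, ← h2] at hadj; exact hadj_rr _ _ (hadj.symm)
        · rw [← h1] at h2; exact Sum.inr_injective h2.symm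
    have hsum : 2 * ((n + 1) / 2)
        ≤ ∑ u : Fin ((n + 1) / 2), (s.filter (fun e => Sum.inr u ∈ e)).card := by
      calc 2 * ((n + 1) / 2) = ∑ _u : Fin ((n + 1) / 2), 2 := by
            simp [Finset.sum_const, Finset.card_univ, mul_comm]
        _ ≤ _ := Finset.sum_le_sum (fun u _ => claimA u)
    have hsum2 : ∑ u : Fin ((n + 1) / 2), (s.filter (fun e => Sum.inr u ∈ e)).card ≤ n := by
      calc ∑ u : Fin ((n + 1) / 2), (s.filter (fun e => Sum.inr u ∈ e)).card
          = ∑ u : Fin ((n + 1) / 2), ∑ e ∈ s, (if Sum.inr u ∈ e then 1 else 0) :=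
            Finset.sum_congr rfl (fun u _ => Finset.card_filter _ _)
        _ = ∑ e ∈ s, ∑ u : Fin ((n + 1) / 2), (if Sum.inr u ∈ e then 1 else 0) :=
            Finset.sum_comm
        _ = ∑ e ∈ s, (Finset.univ.filter (fun u : Fin ((n + 1) / 2) => Sum.inr u ∈ e)).card :=
            Finset.sum_congr rfl (fun e _ => (Finset.card_filter _ _).symm)
        _ ≤ ∑ _e ∈ s, 1 := Finset.sum_le_sum claimB
        _ = n := by rw [Finset.sum_const, smul_eq_mul, mul_one, hscard]
    omega
  · -- σ₂ bound
    refine ⟨Sum.inr ⟨0, by omega⟩, Sum.inr ⟨1, by omega⟩, by simp, hadj_rr _ _, ?_⟩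
    have hadj_rl : ∀ (b : Fin ((n + 1) / 2)) (a : Fin ((n - 1) / 2)),
        J.Adj (Sum.inr b) (Sum.inl a) := fun b a => trivial
    have hdeg : ∀ b : Fin ((n + 1) / 2), deg J (Sum.inr b) = (n - 1) / 2 := by
      intro b
      have hset : J.neighborSet (Sum.inr b) = Set.range Sum.inl := by
        ext x
        cases x with
        | inl a => simp [SimpleGraph.mem_neighborSet, hadj_rl b a]
        | inr a => simpa [SimpleGraph.mem_neighborSet] using hadj_rr b a
      rw [deg, hset, Nat.card_range_of_injective Sum.inl_injective,
        Nat.card_eq_fintype_card, Fintype.card_fin]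
    rw [hdeg, hdeg, hm]
    subst hj
    push_cast
    have hd1 : ((2 * (j : ℝ) + 1) - 1) / ((2 * (j : ℝ) + 1) + 1) + 1
        = (4 * j + 2) / (2 * j + 2) := by
      rw [div_add' _ _ _ (by positivity)]; ring_nf
    rw [hd1, div_div_eq_mul_div]
    have hd2 : (2 * (2 * (j : ℝ) + 1)) * (2 * j + 2) / (4 * j + 2) = 2 * j + 2 := by
      rw [div_eq_iff (by positivity)]; ring
    rw [hd2]; ring_nf; linarith
  · -- toughness bound
    intro sR hT
    set S : Finset (Fin ((n - 1) / 2) ⊕ Fin ((n + 1) / 2)) :=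
      Finset.univ.map ⟨Sum.inl, Sum.inl_injective⟩ with hS
    have hScard : S.card = (n - 1) / 2 := by simp [hS]
    have hmemS : ∀ a, Sum.inl a ∈ S := by intro a; simp [hS]
    have hbot : SimpleGraph.induce (↑S : Set _)ᶜ J = ⊥ := by
      ext ⟨x, hx⟩ ⟨y, hy⟩
      simp only [SimpleGraph.comap_adj, SimpleGraph.bot_adj, iff_false]
      cases x with
      | inl a => exact absurd (hmemS a) hx
      | inr a =>
        cases y with
        | inl b => exact absurd (hmemS b) hy
        | inr b => exact hadj_rr a b
    have hnum : numComp J ↑S = (n + 1) / 2 := by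
      have hsets : (↑S : Set (Fin ((n - 1) / 2) ⊕ Fin ((n + 1) / 2)))ᶜ = Set.range Sum.inr := by
        ext x
        cases x with
        | inl a => simp [hmemS a]
        | inr a => simp [hS]
      unfold numComp
      rw [hbot, numComp_bot, hsets, Nat.card_range_of_injective Sum.inr_injective,
        Nat.card_eq_fintype_card, Fintype.card_fin]
    have h2 : 2 ≤ numComp J ↑S := by omega
    have := hT S h2
    rw [hnum, hScard] at this
    have hj' : sR * ((j : ℝ) + 1) ≤ j := by
      rw [hk, hm] at this; push_cast at this; linarith
    subst hj
    push_cast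
    rw [le_div_iff₀ (by positivity)]
    nlinarith [hj']
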